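/- Let C be the collection consisting of the languages {1, 2, ..., 100} ∪ ℤ_{≥ i} for all i ∈ ℤ, where ℤ_{≥ i} = {i, i+1, i+2, ...}, over the universe ℤ. Then no generating algorithm achieves a Pareto-optimal sequence of non-uniform generation times for C: for every algorithm G that non-uniformly generates from C with generation times t_G(L) (L ∈ C), there exists another algorithm G' that non-uniformly generates from C with t_{G'}(L_i) < t_G(L_i) for some language L_i ∈ C and t_{G'}(L_j) ≤ t_G(L_j) for every other language L_j ∈ C. -/

import Mathlib

/-- The input prefix `x_1, ..., x_t` presented to the algorithm at time `t`
(universe `ℤ`). -/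
def inputListZ (x : ℕ → ℤ) (t : ℕ) : List ℤ := (List.range t).map x

/-- `S_t`: the set of distinct strings among the first `t` inputs. -/
def SfinZ (x : ℕ → ℤ) (t : ℕ) : Finset ℤ := (inputListZ x t).toFinset

/-- `x` is an enumeration of the language `Lang ⊆ ℤ`. -/
def IsEnumOfZ (x : ℕ → ℤ) (Lang : Set ℤ) : Prop :=
  (∀ t, x t ∈ Lang) ∧ ∀ s ∈ Lang, ∃ t, x t = s

/-- Non-uniform generation from a collection of languages over `ℤ` indexed by `ℤ`. -/
def NonUniformGenZ (G : List ℤ → ℤ) (L : ℤ → Set ℤ) (tG : ℤ → ℕ) : Prop :=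
  ∀ i (x : ℕ → ℤ), IsEnumOfZ x (L i) → ∀ t, 1 ≤ t → tG i ≤ (SfinZ x t).card →
    G (inputListZ x t) ∈ L i \ ↑(SfinZ x t)

/-- The language `{1, ..., 100} ∪ ℤ_{≥ i}`. -/
def Lang9 (i : ℤ) : Set ℤ := {z : ℤ | (1 ≤ z ∧ z ≤ 100) ∨ i ≤ z}

/-- Proposition 3.8. For the collection of languages
`{1,...,100} ∪ ℤ_{≥ i}`, `i ∈ ℤ`, no algorithm achieves Pareto-optimal non-uniform
generation times: every algorithm `G` non-uniformly generating from the collection is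
strictly Pareto-dominated by another algorithm `G'`. -/
theorem stmt_9 (G : List ℤ → ℤ) (tG : ℤ → ℕ)
    (hG : NonUniformGenZ G Lang9 tG) :
    ∃ (G' : List ℤ → ℤ) (tG' : ℤ → ℕ),
      NonUniformGenZ G' Lang9 tG' ∧ (∃ i, tG' i < tG i) ∧ ∀ j, tG' j ≤ tG j := by
  classical
  set base : List ℤ := (List.range 100).map (fun n : ℕ => (n : ℤ) + 1) with hbase
  set z : ℤ := G base with hz
  set i0 : ℤ := max z 100 + 1 with hi0
  -- membership in base
  have hmem_base : ∀ s : ℤ, s ∈ base ↔ (1 ≤ s ∧ s ≤ 100) := by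
    intro s
    simp only [hbase, List.mem_map, List.mem_range]
    constructor
    · rintro ⟨n, hn, rfl⟩; omega
    · rintro ⟨h1, h2⟩; exact ⟨(s - 1).toNat, by omega, by omega⟩
  -- Lemma A : tG j ≤ 100 → j ≤ max z 100
  have lemA : ∀ j : ℤ, tG j ≤ 100 → j ≤ max z 100 := by
    intro j hj
    by_contra hlt
    push_neg at hlt
    have hj101 : (101 : ℤ) ≤ j := by omega
    set x : ℕ → ℤ := fun n => if n < 100 then (n : ℤ) + 1 else j + ((n : ℤ) - 100) with hx
    have henum : IsEnumOfZ x (Lang9 j) := by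
      constructor
      · intro n
        by_cases hn : n < 100
        · exact Or.inl (by simp [hx, hn])
        · right; simp [hx, hn]; omega
      · intro s hs
        rcases hs with ⟨h1, h2⟩ | h
        · exact ⟨(s - 1).toNat, by simp [hx]; omega⟩
        · refine ⟨100 + (s - j).toNat, ?_⟩
          simp [hx]; omega
    have hlist : inputListZ x 100 = base := by
      simp only [inputListZ, hbase]
      apply List.map_congr_left
      intro n hn
      simp only [List.mem_range] at hn
      simp [hx, hn]
    have hcard : (SfinZ x 100).card = 100 := by
      rw [SfinZ, hlist, hbase, List.toFinset_card_of_nodup, List.length_map,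
        List.length_range]
      exact (List.nodup_range (n := 100)).map (fun a b h => by omega)
    have := hG j x henum 100 (by norm_num) (by omega)
    rw [hlist] at this
    rcases this with ⟨hmem, hnot⟩
    have hznotin : z ∉ base := by
      intro h
      exact hnot (by rw [SfinZ, hlist]; exact List.mem_toFinset.mpr h)
    rcases hmem with ⟨h1, h2⟩ | h
    · exact hznotin ((hmem_base z).mpr ⟨h1, h2⟩)
    · have : j ≤ max z 100 := le_trans h (le_max_left _ _)
      omega
  have hi0big : 101 ≤ tG i0 := by
    by_contra h
    push_neg at h
    have := lemA i0 (by omega)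
    omega
  -- the improved algorithm
  refine ⟨fun w => if h : 100 ≤ w.toFinset.card then
      max (w.toFinset.max' (Finset.card_pos.mp (by omega))) i0 + 1 else G w,
    fun j => if j = i0 then 100 else min (tG j) 101, ?_, ⟨i0, by simp; omega⟩, ?_⟩
  · intro j x henum t ht hcard
    by_cases h100 : 100 ≤ (inputListZ x t).toFinset.card
    · simp only [dif_pos h100]
      set S : Finset ℤ := (inputListZ x t).toFinset with hS
      have hne : S.Nonempty := Finset.card_pos.mp (by omega)
      set m : ℤ := S.max' (Finset.card_pos.mp (by omega)) with hm
      have hmax : ∀ s ∈ S, s ≤ m := fun s hs => S.le_max' s hs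
      have hSL : ∀ s ∈ S, s ∈ Lang9 j := by
        intro s hs
        rw [hS, List.mem_toFinset] at hs
        simp only [inputListZ, List.mem_map] at hs
        obtain ⟨n, _, rfl⟩ := hs
        exact henum.1 n
      constructor
      · -- max m i0 + 1 ∈ Lang9 j
        right
        by_cases hji : j = i0
        · subst hji; have := le_max_right m i0; omega
        · have hcard' : min (tG j) 101 ≤ S.card := by
            simpa [hji, SfinZ, ← hS] using hcard
          by_cases htj : tG j ≤ 100
          · have := lemA j htj
            have := le_max_right m i0
            omega
          · -- tG j ≥ 101, so S has 101 elements, one is ≥ j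
            have h101 : 101 ≤ S.card := by omega
            by_contra hno
            push_neg at hno
            have hsub : S ⊆ Finset.Icc (1 : ℤ) 100 := by
              intro s hs
              rcases hSL s hs with ⟨h1, h2⟩ | h
              · exact Finset.mem_Icc.mpr ⟨h1, h2⟩
              · exfalso
                have := hmax s hs
                have := le_max_left m i0
                omega
            have := Finset.card_le_card hsub
            simp at this
            omega
      · -- not in S
        intro hmem
        have := hmax _ hmem
        have := le_max_left m i0
        omega
    · simp only [dif_neg h100]
      have hji : j ≠ i0 := by
        intro h; subst h
        simp only [if_pos rfl] at hcard
        exact h100 hcard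
      have hcard' : min (tG j) 101 ≤ (SfinZ x t).card := by simpa [hji] using hcard
      have hcard2 : (SfinZ x t).card < 100 := by
        rw [SfinZ]; omega
      have : tG j ≤ (SfinZ x t).card := by omega
      exact hG j x henum t ht this
  · intro j
    by_cases h : j = i0
    · subst h; simp; omega
    · simp [h]
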